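/- Let F ⊆ 2^[n], ℓ ≥ 1, and suppose S is a real number such that for every full chain C in 2^[n], Σ over ℓ-chains G_1 ⊂ ... ⊂ G_ℓ with all G_i ∈ F ∩ C of C(n,|G_ℓ|)·C(|G_ℓ|,|G_{ℓ-1}|)···C(|G_2|,|G_1|) ≤ S. Then the number of ℓ-chains contained in F is at most S. -/

import Mathlib

open Finset

section perm
variable {α β : Type*} [DecidableEq α] [DecidableEq β]

def permCompEquiv (f g : α → β) :
    {σ : Equiv.Perm α // ∀ x, f (σ x) = g x} ≃ ∀ b : β, ({x // g x = b} ≃ {x // f x = b}) where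
  toFun σ b :=
    { toFun := fun x => ⟨σ.1 x.1, by rw [σ.2]; exact x.2⟩
      invFun := fun y => ⟨σ.1.symm y.1, by
        have h := σ.2 (σ.1.symm y.1); rw [Equiv.apply_symm_apply] at h; rw [← h]; exact y.2⟩
      left_inv := fun x => by simp
      right_inv := fun y => by simp }
  invFun e :=
    ⟨{ toFun := fun x => (e (g x) ⟨x, rfl⟩).1
       invFun := fun y => ((e (f y)).symm ⟨y, rfl⟩).1
       left_inv := fun x => by
         dsimp only
         have key : ∀ (b : β) (y : {y // f y = b}), ((e (f y.1)).symm ⟨y.1, rfl⟩).1 = ((e b).symm y).1 := by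
           rintro b ⟨y, hy⟩; subst hy; rfl
         rw [key (g x) (e (g x) ⟨x, rfl⟩)]
         simp
       right_inv := fun y => by
         dsimp only
         have key : ∀ (b : β) (x : {x // g x = b}), (e (g x.1) ⟨x.1, rfl⟩).1 = ((e b) x).1 := by
           rintro b ⟨x, hx⟩; subst hx; rfl
         rw [key (f y) ((e (f y)).symm ⟨y, rfl⟩)]
         simp },
     fun x => (e (g x) ⟨x, rfl⟩).2⟩
  left_inv := fun σ => by
    apply Subtype.ext; apply Equiv.ext; intro x; rfl
  right_inv := fun e => by
    funext b; apply Equiv.ext; intro x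
    apply Subtype.ext
    have key : ∀ (b : β) (x : {x // g x = b}), (e (g x.1) ⟨x.1, rfl⟩).1 = ((e b) x).1 := by
      rintro b ⟨x, hx⟩; subst hx; rfl
    exact key b x

theorem card_perm_comp [Fintype α] [Fintype β] (f g : α → β)
    (hfib : ∀ b, (univ.filter fun x => f x = b).card = (univ.filter fun x => g x = b).card) :
    (univ.filter fun σ : Equiv.Perm α => ∀ x, f (σ x) = g x).card
      = ∏ b : β, Nat.factorial (univ.filter fun x => g x = b).card := by
  rw [← Fintype.card_subtype]
  rw [Fintype.card_congr (permCompEquiv f g), Fintype.card_pi]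
  refine Finset.prod_congr rfl fun b _ => ?_
  have e : {x // g x = b} ≃ {x // f x = b} :=
    Fintype.equivOfCardEq (by simp only [Fintype.card_subtype]; exact (hfib b).symm)
  rw [Fintype.card_equiv e, Fintype.card_subtype]

section chain
variable {n ℓ : ℕ}

/-- the full chain associated to a permutation -/
def Abar (σ : Equiv.Perm (Fin n)) (i : ℕ) : Finset (Fin n) :=
  univ.filter fun y => (σ.symm y : ℕ) < i

theorem card_filter_val_lt (m b : ℕ) :
    ((univ : Finset (Fin m)).filter fun i : Fin m => (i : ℕ) < b).card = min b m := by
  rw [← Finset.card_range (min b m)]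
  apply Finset.card_nbij (fun i : Fin m => (i : ℕ)) (t := Finset.range (min b m))
  · intro i hi; simp only [Finset.mem_coe, mem_filter, mem_univ, true_and] at hi
    simp [lt_min_iff, hi, i.2]
  · intro i hi j hj hij; exact Fin.ext hij
  · intro a ha; simp only [Finset.mem_coe, Finset.mem_range, lt_min_iff] at ha
    exact ⟨⟨a, ha.2⟩, by simp [ha.1], rfl⟩

theorem card_filter_val_le (m b : ℕ) :
    ((univ : Finset (Fin m)).filter fun i : Fin m => (i : ℕ) ≤ b).card = min (b + 1) m := by
  rw [← card_filter_val_lt m (b + 1)]; simp only [Nat.lt_succ_iff]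

theorem Abar_card (σ : Equiv.Perm (Fin n)) {i : ℕ} (hi : i ≤ n) : (Abar σ i).card = i := by
  have : (Abar σ i).card = ((univ : Finset (Fin n)).filter fun x : Fin n => (x : ℕ) < i).card := by
    apply Finset.card_nbij (fun y => σ.symm y)
    · intro y hy; simp only [Abar, Finset.mem_coe, mem_filter, mem_univ, true_and] at hy ⊢; exact hy
    · intro a _ b _ hab; exact σ.symm.injective hab
    · intro x hx; simp only [Finset.mem_coe, mem_filter, mem_univ, true_and] at hx
      exact ⟨σ x, by simp [Abar, hx], by simp⟩
  rw [this, card_filter_val_lt, min_eq_left hi]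

theorem Abar_subset (σ : Equiv.Perm (Fin n)) {i j : ℕ} (hij : i ≤ j) : Abar σ i ⊆ Abar σ j := by
  intro y hy; simp only [Abar, mem_filter, mem_univ, true_and] at hy ⊢; omega

theorem Abar_mem (σ : Equiv.Perm (Fin n)) {i : ℕ} (y : Fin n) :
    y ∈ Abar σ i ↔ (σ.symm y : ℕ) < i := by simp [Abar]

end chain

theorem upset_iff {m : ℕ} (p q : Fin m → Prop) [DecidablePred p] [DecidablePred q]
    (hp : ∀ i j : Fin m, i ≤ j → p i → p j) (hq : ∀ i j : Fin m, i ≤ j → q i → q j)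
    (hc : (univ.filter p).card = (univ.filter q).card) (i : Fin m) : p i ↔ q i := by
  have key : ∀ (p q : Fin m → Prop) [DecidablePred p] [DecidablePred q],
      (∀ i j : Fin m, i ≤ j → p i → p j) → (∀ i j : Fin m, i ≤ j → q i → q j) →
      (univ.filter p).card = (univ.filter q).card → ∀ i, p i → q i := by
    intro p q _ _ hp hq hc i hpi
    by_contra hqi
    have h1 : Finset.Ici i ⊆ univ.filter p := by
      intro j hj; simp only [Finset.mem_Ici] at hj
      simp only [mem_filter, mem_univ, true_and]; exact hp i j hj hpi
    have h2 : univ.filter q ⊆ Finset.Ioi i := by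
      intro j hj; simp only [mem_filter, mem_univ, true_and] at hj
      simp only [Finset.mem_Ioi]
      by_contra hji
      exact hqi (hq j i (le_of_not_gt hji) hj)
    have c1 := Finset.card_le_card h1
    have c2 := Finset.card_le_card h2
    rw [Fin.card_Ici] at c1
    rw [Fin.card_Ioi] at c2
    have : (i : ℕ) < m := i.2
    omega
  exact ⟨key p q hp hq hc i, key q p hq hp hc.symm i⟩

theorem downset_iff {m : ℕ} (p q : Fin m → Prop) [DecidablePred p] [DecidablePred q]
    (hp : ∀ i j : Fin m, i ≤ j → p j → p i) (hq : ∀ i j : Fin m, i ≤ j → q j → q i)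
    (hc : (univ.filter p).card = (univ.filter q).card) (i : Fin m) : p i ↔ q i := by
  have hnp : (univ.filter fun i => ¬ p i).card = (univ.filter fun i => ¬ q i).card := by
    rw [Finset.filter_not, Finset.filter_not, Finset.card_sdiff_of_subset (Finset.filter_subset _ _),
      Finset.card_sdiff_of_subset (Finset.filter_subset _ _), hc]
  have := upset_iff (fun i => ¬ p i) (fun i => ¬ q i)
    (fun i j hij hpi hpj => hpi (hp i j hij hpj))
    (fun i j hij hqi hqj => hqi (hq i j hij hqj)) hnp i
  tauto
theorem factorial_chain_key (ℓ : ℕ) (k : Fin (ℓ + 1) → ℕ)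
    (mono : ∀ i j : Fin (ℓ + 1), i ≤ j → k i ≤ k j) :
    (∏ j : Fin ℓ, (k j.succ).choose (k j.castSucc)) *
      (Nat.factorial (k 0) * ∏ j : Fin ℓ, Nat.factorial (k j.succ - k j.castSucc))
      = Nat.factorial (k (Fin.last ℓ)) := by
  induction ℓ with
  | zero => simp [Fin.last]
  | succ ℓ ih =>
    have hmono' : ∀ i j : Fin (ℓ + 1), i ≤ j → (k ∘ Fin.castSucc) i ≤ (k ∘ Fin.castSucc) j := by
      intro i j hij; exact mono _ _ (by simpa using hij)
    have H := ih (k ∘ Fin.castSucc) hmono'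
    rw [Fin.prod_univ_castSucc (f := fun j : Fin (ℓ+1) => (k j.succ).choose (k j.castSucc))]
    rw [Fin.prod_univ_castSucc (f := fun j : Fin (ℓ+1) => Nat.factorial (k j.succ - k j.castSucc))]
    simp only [Function.comp] at H
    have hcs : ∀ j : Fin ℓ, (j.castSucc).succ = (j.succ).castSucc := fun j => (Fin.succ_castSucc j).symm
    have hlast : (Fin.last ℓ).succ = Fin.last (ℓ + 1) := rfl
    have hble : k ((Fin.last ℓ).castSucc) ≤ k (Fin.last (ℓ + 1)) := mono _ _ (by simp [Fin.le_def])
    calc (∏ j : Fin ℓ, (k j.succ.castSucc).choose (k j.castSucc.castSucc)) *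
          (k (Fin.last (ℓ+1))).choose (k (Fin.last ℓ).castSucc) *
          (Nat.factorial (k 0) * ((∏ j : Fin ℓ, Nat.factorial (k j.succ.castSucc - k j.castSucc.castSucc)) *
            Nat.factorial (k (Fin.last (ℓ+1)) - k (Fin.last ℓ).castSucc)))
        = ((∏ j : Fin ℓ, (k j.succ.castSucc).choose (k j.castSucc.castSucc)) *
            (Nat.factorial (k ((0 : Fin (ℓ+1)).castSucc)) * ∏ j : Fin ℓ, Nat.factorial (k j.succ.castSucc - k j.castSucc.castSucc))) *
          ((k (Fin.last (ℓ+1))).choose (k (Fin.last ℓ).castSucc) * Nat.factorial (k (Fin.last (ℓ+1)) - k (Fin.last ℓ).castSucc)) := by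
          have h0 : k ((0 : Fin (ℓ+1)).castSucc) = k 0 := rfl
          rw [h0]; ring
      _ = Nat.factorial (k (Fin.last ℓ).castSucc) *
          ((k (Fin.last (ℓ+1))).choose (k (Fin.last ℓ).castSucc) * Nat.factorial (k (Fin.last (ℓ+1)) - k (Fin.last ℓ).castSucc)) := by
          rw [H]
      _ = Nat.factorial (k (Fin.last (ℓ+1))) := by
          rw [← Nat.choose_mul_factorial_mul_factorial hble]; ring

section fibers
variable {n ℓ : ℕ}

def tcount (G : Fin (ℓ + 1) → Finset (Fin n)) (y : Fin n) : ℕ :=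
  (univ.filter fun i => y ∉ G i).card

def scount (G : Fin (ℓ + 1) → Finset (Fin n)) (x : Fin n) : ℕ :=
  (univ.filter fun i : Fin (ℓ + 1) => (G i).card ≤ (x : ℕ)).card

theorem tcount_le (G : Fin (ℓ + 1) → Finset (Fin n)) (y : Fin n) : tcount G y ≤ ℓ + 1 :=
  le_trans (Finset.card_filter_le _ _) (by simp)

theorem scount_le (G : Fin (ℓ + 1) → Finset (Fin n)) (x : Fin n) : scount G x ≤ ℓ + 1 :=
  le_trans (Finset.card_filter_le _ _) (by simp)

def tfin (G : Fin (ℓ + 1) → Finset (Fin n)) (y : Fin n) : Fin (ℓ + 2) :=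
  ⟨tcount G y, by have := tcount_le G y; omega⟩

def sfin (G : Fin (ℓ + 1) → Finset (Fin n)) (x : Fin n) : Fin (ℓ + 2) :=
  ⟨scount G x, by have := scount_le G x; omega⟩

def Kfun (G : Fin (ℓ + 1) → Finset (Fin n)) (b : ℕ) : ℕ :=
  if h : b ≤ ℓ then (G ⟨b, by omega⟩).card else n

variable {G : Fin (ℓ + 1) → Finset (Fin n)}

theorem GS (hG : ∀ i j, i < j → G i ⊂ G j) : ∀ i j : Fin (ℓ + 1), i ≤ j → G i ⊆ G j := by
  intro i j hij
  rcases eq_or_lt_of_le hij with rfl | hlt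
  · exact subset_rfl
  · exact (hG i j hlt).subset

theorem kmono (hG : ∀ i j, i < j → G i ⊂ G j) :
    ∀ i j : Fin (ℓ + 1), i ≤ j → (G i).card ≤ (G j).card :=
  fun i j hij => Finset.card_le_card (GS hG i j hij)

theorem kle (G : Fin (ℓ + 1) → Finset (Fin n)) (i : Fin (ℓ + 1)) : (G i).card ≤ n := by
  simpa using Finset.card_le_univ (G i)

theorem tc_le_iff (hG : ∀ i j, i < j → G i ⊂ G j) {b : ℕ} (hb : b ≤ ℓ) (y : Fin n) :
    tcount G y ≤ b ↔ y ∈ G ⟨b, by omega⟩ := by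
  constructor
  · intro hle
    by_contra hy
    have hsub : (univ : Finset (Fin (ℓ + 1))).filter (fun i : Fin (ℓ + 1) => (i : ℕ) ≤ b)
        ⊆ univ.filter fun i => y ∉ G i := by
      intro i hi
      simp only [mem_filter, mem_univ, true_and] at hi ⊢
      intro hmem
      exact hy (GS hG i ⟨b, by omega⟩ (by simpa [Fin.le_def] using hi) hmem)
    have := Finset.card_le_card hsub
    rw [card_filter_val_le] at this
    unfold tcount at hle
    omega
  · intro hy
    have hsub : (univ.filter fun i => y ∉ G i)
        ⊆ (univ : Finset (Fin (ℓ + 1))).filter (fun i : Fin (ℓ + 1) => (i : ℕ) < b) := by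
      intro i hi
      simp only [mem_filter, mem_univ, true_and] at hi ⊢
      by_contra hib
      exact hi (GS hG ⟨b, by omega⟩ i (by simpa [Fin.le_def] using le_of_not_gt hib) hy)
    have := Finset.card_le_card hsub
    rw [card_filter_val_lt] at this
    unfold tcount
    omega

theorem sc_le_iff (hG : ∀ i j, i < j → G i ⊂ G j) {b : ℕ} (hb : b ≤ ℓ) (x : Fin n) :
    scount G x ≤ b ↔ (x : ℕ) < (G ⟨b, by omega⟩).card := by
  constructor
  · intro hle
    by_contra hx
    have hsub : (univ : Finset (Fin (ℓ + 1))).filter (fun i : Fin (ℓ + 1) => (i : ℕ) ≤ b)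
        ⊆ univ.filter fun i : Fin (ℓ + 1) => (G i).card ≤ (x : ℕ) := by
      intro i hi
      simp only [mem_filter, mem_univ, true_and] at hi ⊢
      have := kmono hG i ⟨b, by omega⟩ (by simpa [Fin.le_def] using hi)
      omega
    have := Finset.card_le_card hsub
    rw [card_filter_val_le] at this
    unfold scount at hle
    omega
  · intro hx
    have hsub : (univ.filter fun i : Fin (ℓ + 1) => (G i).card ≤ (x : ℕ))
        ⊆ (univ : Finset (Fin (ℓ + 1))).filter (fun i : Fin (ℓ + 1) => (i : ℕ) < b) := by
      intro i hi
      simp only [mem_filter, mem_univ, true_and] at hi ⊢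
      by_contra hib
      have := kmono hG ⟨b, by omega⟩ i (by simpa [Fin.le_def] using le_of_not_gt hib)
      omega
    have := Finset.card_le_card hsub
    rw [card_filter_val_lt] at this
    unfold scount
    omega

theorem cumul_t (hG : ∀ i j, i < j → G i ⊂ G j) {b : ℕ} (hb : b ≤ ℓ + 1) :
    (univ.filter fun y => tcount G y ≤ b).card = Kfun G b := by
  unfold Kfun
  split_ifs with h
  · have : (univ.filter fun y => tcount G y ≤ b) = G ⟨b, by omega⟩ := by
      ext y; simp only [mem_filter, mem_univ, true_and]; exact tc_le_iff hG h y
    rw [this]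
  · have : (univ.filter fun y => tcount G y ≤ b) = univ := by
      apply Finset.filter_true_of_mem
      intro y _
      have := tcount_le G y; omega
    rw [this]; simp

theorem cumul_s (hG : ∀ i j, i < j → G i ⊂ G j) {b : ℕ} (hb : b ≤ ℓ + 1) :
    (univ.filter fun x => scount G x ≤ b).card = Kfun G b := by
  unfold Kfun
  split_ifs with h
  · have : (univ.filter fun x => scount G x ≤ b)
        = univ.filter fun x : Fin n => (x : ℕ) < (G ⟨b, by omega⟩).card := by
      apply Finset.filter_congr
      intro x _; exact sc_le_iff hG h x
    rw [this, card_filter_val_lt, min_eq_left (kle G _)]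
  · have : (univ.filter fun x => scount G x ≤ b) = univ := by
      apply Finset.filter_true_of_mem
      intro x _
      have := scount_le G x; omega
    rw [this]; simp [Finset.card_univ]

theorem fiber_card_of_cumul {N : ℕ} (u : Fin N → ℕ) (K : ℕ → ℕ) (b : ℕ)
    (hc1 : (univ.filter fun x => u x ≤ b).card = K b)
    (hc2 : b = 0 ∨ (univ.filter fun x => u x ≤ b - 1).card = K (b - 1)) :
    (univ.filter fun x => u x = b).card = K b - (if b = 0 then 0 else K (b - 1)) := by
  rcases Nat.eq_zero_or_pos b with rfl | hb
  · have hif : (if (0:ℕ) = 0 then (0:ℕ) else K (0 - 1)) = 0 := if_pos rfl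
    rw [hif, Nat.sub_zero, ← hc1]
    congr 1
    apply Finset.filter_congr
    intro x _; simp [Nat.le_zero]
  · rcases hc2 with rfl | hc2
    · omega
    have hsplit : (univ.filter fun x => u x = b)
        = (univ.filter fun x => u x ≤ b) \ (univ.filter fun x => u x ≤ b - 1) := by
      ext x
      simp only [mem_filter, mem_univ, true_and, Finset.mem_sdiff]
      omega
    rw [hsplit, Finset.card_sdiff_of_subset, hc1, hc2, if_neg (by omega)]
    intro x hx
    simp only [mem_filter, mem_univ, true_and] at hx ⊢
    omega

theorem tfiber_card (hG : ∀ i j, i < j → G i ⊂ G j) (bb : Fin (ℓ + 2)) :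
    (univ.filter fun y => tfin G y = bb).card
      = Kfun G bb - (if (bb : ℕ) = 0 then 0 else Kfun G ((bb : ℕ) - 1)) := by
  have h1 : (univ.filter fun y => tfin G y = bb) = univ.filter fun y => tcount G y = (bb : ℕ) := by
    apply Finset.filter_congr; intro y _
    simp [tfin, Fin.ext_iff]
  rw [h1]
  exact fiber_card_of_cumul _ _ _ (cumul_t hG (by omega))
    (by rcases Nat.eq_zero_or_pos (bb : ℕ) with h | h
        · exact Or.inl h
        · exact Or.inr (cumul_t hG (by omega)))

theorem sfiber_card (hG : ∀ i j, i < j → G i ⊂ G j) (bb : Fin (ℓ + 2)) :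
    (univ.filter fun x => sfin G x = bb).card
      = Kfun G bb - (if (bb : ℕ) = 0 then 0 else Kfun G ((bb : ℕ) - 1)) := by
  have h1 : (univ.filter fun x => sfin G x = bb) = univ.filter fun x => scount G x = (bb : ℕ) := by
    apply Finset.filter_congr; intro x _
    simp [sfin, Fin.ext_iff]
  rw [h1]
  exact fiber_card_of_cumul _ _ _ (cumul_s hG (by omega))
    (by rcases Nat.eq_zero_or_pos (bb : ℕ) with h | h
        · exact Or.inl h
        · exact Or.inr (cumul_s hG (by omega)))

end fibers
section compat
variable {n ℓ : ℕ} {G : Fin (ℓ + 1) → Finset (Fin n)}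

theorem compat_iff (hG : ∀ i j, i < j → G i ⊂ G j) (σ : Equiv.Perm (Fin n)) :
    (∀ i, Abar σ ((G i).card) = G i) ↔ (∀ x, tfin G (σ x) = sfin G x) := by
  constructor
  · intro hσ x
    apply Fin.ext
    show tcount G (σ x) = scount G x
    unfold tcount scount
    congr 1
    apply Finset.filter_congr
    intro i _
    have hmem : σ x ∈ G i ↔ (x : ℕ) < (G i).card := by
      conv_lhs => rw [← hσ i]
      rw [Abar_mem]
      simp
    rw [hmem]
    omega
  · intro hσ i
    ext y
    have hy : σ (σ.symm y) = y := Equiv.apply_symm_apply σ y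
    rw [Abar_mem]
    have hc : ((univ : Finset (Fin (ℓ + 1))).filter fun j => (G j).card ≤ ((σ.symm y : Fin n) : ℕ)).card
        = ((univ : Finset (Fin (ℓ + 1))).filter fun j => σ (σ.symm y) ∉ G j).card := by
      have h := hσ (σ.symm y)
      have h' : tcount G (σ (σ.symm y)) = scount G (σ.symm y) := by
        simpa [tfin, sfin, Fin.ext_iff] using h
      unfold tcount scount at h'
      omega
    have hiff := downset_iff (fun j => (G j).card ≤ ((σ.symm y : Fin n) : ℕ))
      (fun j => σ (σ.symm y) ∉ G j)
      (fun i j hij hpj => le_trans (kmono hG i j hij) hpj)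
      (fun i j hij hqj hmem => hqj (GS hG i j hij hmem))
      hc i
    rw [hy] at hiff
    constructor
    · intro hlt
      by_contra hmem
      exact absurd (hiff.mpr hmem) (by omega)
    · intro hmem
      by_contra hlt
      exact hiff.mp (by omega) hmem

theorem count_compat (hG : ∀ i j, i < j → G i ⊂ G j) :
    ((univ.filter fun σ : Equiv.Perm (Fin n) => ∀ i, Abar σ ((G i).card) = G i).card)
      * (n.choose (G (Fin.last ℓ)).card *
        ∏ j : Fin ℓ, ((G j.succ).card).choose ((G j.castSucc).card)) = n.factorial := by
  have hfib : ∀ b : Fin (ℓ + 2),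
      (univ.filter fun y => tfin G y = b).card = (univ.filter fun x => sfin G x = b).card := by
    intro b
    rw [tfiber_card hG b, sfiber_card hG b]
  have h1 := card_perm_comp (tfin G) (sfin G) hfib
  have h0 : (univ.filter fun σ : Equiv.Perm (Fin n) => ∀ i, Abar σ ((G i).card) = G i).card
      = (@Finset.filter _ (fun σ : Equiv.Perm (Fin n) => ∀ x, tfin G (σ x) = sfin G x)
          (fun σ => Fintype.decidableForallFintype) univ).card := by
    congr 1
    exact @Finset.filter_congr _ _ _ _ (fun σ => Fintype.decidableForallFintype) _
      (fun σ _ => compat_iff hG σ)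
  rw [h0, h1]
  -- compute the product of factorials of fibers
  have hval : ∀ b : Fin (ℓ + 2), (univ.filter fun x => sfin G x = b).card
      = Kfun G (b : ℕ) - (if (b : ℕ) = 0 then 0 else Kfun G ((b : ℕ) - 1)) :=
    fun b => sfiber_card hG b
  have hprod : (∏ b : Fin (ℓ + 2), Nat.factorial (univ.filter fun x => sfin G x = b).card)
      = Nat.factorial ((G 0).card) *
        (∏ j : Fin ℓ, Nat.factorial ((G j.succ).card - (G j.castSucc).card)) *
        Nat.factorial (n - (G (Fin.last ℓ)).card) := by
    rw [Fin.prod_univ_castSucc (f := fun b : Fin (ℓ + 2) =>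
      Nat.factorial (univ.filter fun x => sfin G x = b).card)]
    rw [Fin.prod_univ_succ (f := fun b : Fin (ℓ + 1) =>
      Nat.factorial (univ.filter fun x => sfin G x = b.castSucc).card)]
    have h0 : (univ.filter fun x => sfin G x = ((0 : Fin (ℓ+1)).castSucc)).card = (G 0).card := by
      rw [hval]
      have : ((((0 : Fin (ℓ+1)).castSucc) : Fin (ℓ+2)) : ℕ) = 0 := rfl
      rw [this, if_pos rfl, Nat.sub_zero]
      unfold Kfun
      rw [dif_pos (Nat.zero_le ℓ)]
      rfl
    have hmid : ∀ j : Fin ℓ, (univ.filter fun x => sfin G x = (j.succ.castSucc)).card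
        = (G j.succ).card - (G j.castSucc).card := by
      intro j
      rw [hval]
      have hv : (((j.succ.castSucc) : Fin (ℓ+2)) : ℕ) = (j : ℕ) + 1 := rfl
      rw [hv, if_neg (by omega)]
      unfold Kfun
      rw [dif_pos (by omega : (j : ℕ) + 1 ≤ ℓ), dif_pos (by omega : (j : ℕ) + 1 - 1 ≤ ℓ)]
      congr 2 <;> exact Fin.ext (by simp)
    have hlast : (univ.filter fun x => sfin G x = Fin.last (ℓ + 1)).card
        = n - (G (Fin.last ℓ)).card := by
      rw [hval]
      have hv : ((Fin.last (ℓ + 1) : Fin (ℓ+2)) : ℕ) = ℓ + 1 := rfl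
      rw [hv, if_neg (by omega)]
      unfold Kfun
      rw [dif_neg (by omega), dif_pos (by omega : ℓ + 1 - 1 ≤ ℓ)]
      congr 2 <;> exact Fin.ext (by simp)
    rw [h0, hlast]
    rw [Finset.prod_congr rfl fun j _ => congrArg Nat.factorial (hmid j)]
  rw [hprod]
  have hkey := factorial_chain_key ℓ (fun i => (G i).card) (kmono hG)
  have hble : (G (Fin.last ℓ)).card ≤ n := kle G _
  calc Nat.factorial ((G 0).card) * (∏ j : Fin ℓ, Nat.factorial ((G j.succ).card - (G j.castSucc).card)) *
        Nat.factorial (n - (G (Fin.last ℓ)).card) *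
        (n.choose (G (Fin.last ℓ)).card * ∏ j : Fin ℓ, ((G j.succ).card).choose ((G j.castSucc).card))
      = ((∏ j : Fin ℓ, ((G j.succ).card).choose ((G j.castSucc).card)) *
          (Nat.factorial ((G 0).card) * ∏ j : Fin ℓ, Nat.factorial ((G j.succ).card - (G j.castSucc).card))) *
        (n.choose (G (Fin.last ℓ)).card * Nat.factorial (n - (G (Fin.last ℓ)).card)) := by ring
    _ = Nat.factorial ((G (Fin.last ℓ)).card) *
        (n.choose (G (Fin.last ℓ)).card * Nat.factorial (n - (G (Fin.last ℓ)).card)) := by rw [hkey]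
    _ = n.factorial := by
        rw [← Nat.choose_mul_factorial_mul_factorial hble]; ring

end compat

/-- If for every full chain `C` in `2^[n]` the total weight
`∑ C(n,|G_ℓ|)·C(|G_ℓ|,|G_{ℓ-1}|)⋯C(|G_2|,|G_1|)` over all `ℓ`-chains contained in
`F ∩ C` is at most `S`, then the number of `ℓ`-chains in `F` is at most `S`.
(Here the chain length is `ℓ + 1 ≥ 1`; an `ℓ`-chain is encoded as a strictly
increasing tuple of sets.) -/
theorem count_ell_chains (n ℓ : ℕ) (F : Finset (Finset (Fin n))) (S : ℝ)
    (h : ∀ A : ℕ → Finset (Fin n), (∀ i ≤ n, (A i).card = i) →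
      (∀ i < n, A i ⊆ A (i + 1)) →
      ∑ c ∈ (Finset.univ : Finset (Fin (ℓ + 1) → Fin (n + 1))).filter
          (fun c => (∀ i j, i < j → c i < c j) ∧ ∀ i, A (c i) ∈ F),
        ((n.choose (c (Fin.last ℓ)) *
            ∏ j : Fin ℓ, Nat.choose (c j.succ) (c j.castSucc) : ℕ) : ℝ) ≤ S) :
    (((Finset.univ : Finset (Fin (ℓ + 1) → Finset (Fin n))).filter
        (fun G => (∀ i j, i < j → G i ⊂ G j) ∧ ∀ i, G i ∈ F)).card : ℝ) ≤ S := by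
  classical
  set chainsF := (Finset.univ : Finset (Fin (ℓ + 1) → Finset (Fin n))).filter
      (fun G => (∀ i j, i < j → G i ⊂ G j) ∧ ∀ i, G i ∈ F) with hchainsF
  -- the total sum over all permutations
  have hsum : ∀ σ : Equiv.Perm (Fin n),
      ∑ c ∈ (Finset.univ : Finset (Fin (ℓ + 1) → Fin (n + 1))).filter
          (fun c => (∀ i j, i < j → c i < c j) ∧ ∀ i, Abar σ (c i) ∈ F),
        ((n.choose (c (Fin.last ℓ)) *
            ∏ j : Fin ℓ, Nat.choose (c j.succ) (c j.castSucc) : ℕ) : ℝ) ≤ S := by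
    intro σ
    exact h (Abar σ) (fun i hi => Abar_card σ hi) (fun i _ => Abar_subset σ (by omega))
  have hT : (∑ σ : Equiv.Perm (Fin n),
      ∑ c ∈ (Finset.univ : Finset (Fin (ℓ + 1) → Fin (n + 1))).filter
          (fun c => (∀ i j, i < j → c i < c j) ∧ ∀ i, Abar σ (c i) ∈ F),
        ((n.choose (c (Fin.last ℓ)) *
            ∏ j : Fin ℓ, Nat.choose (c j.succ) (c j.castSucc) : ℕ) : ℝ))
      ≤ (n.factorial : ℝ) * S := by
    calc _ ≤ (Finset.univ : Finset (Equiv.Perm (Fin n))).card • S :=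
            Finset.sum_le_card_nsmul _ _ _ (fun σ _ => hsum σ)
      _ = (n.factorial : ℝ) * S := by
            rw [nsmul_eq_mul, Finset.card_univ, Fintype.card_perm, Fintype.card_fin]
  -- rewrite the total as a sum over chains
  have hswap : (∑ σ : Equiv.Perm (Fin n),
      ∑ c ∈ (Finset.univ : Finset (Fin (ℓ + 1) → Fin (n + 1))).filter
          (fun c => (∀ i j, i < j → c i < c j) ∧ ∀ i, Abar σ (c i) ∈ F),
        ((n.choose (c (Fin.last ℓ)) *
            ∏ j : Fin ℓ, Nat.choose (c j.succ) (c j.castSucc) : ℕ) : ℝ))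
      = ∑ G ∈ chainsF, (n.factorial : ℝ) := by
    have e1 : (∑ σ : Equiv.Perm (Fin n),
        ∑ c ∈ (Finset.univ : Finset (Fin (ℓ + 1) → Fin (n + 1))).filter
            (fun c => (∀ i j, i < j → c i < c j) ∧ ∀ i, Abar σ (c i) ∈ F),
          ((n.choose (c (Fin.last ℓ)) *
              ∏ j : Fin ℓ, Nat.choose (c j.succ) (c j.castSucc) : ℕ) : ℝ))
        = ∑ p ∈ (Finset.univ : Finset (Equiv.Perm (Fin n))).sigma
            (fun σ => (Finset.univ : Finset (Fin (ℓ + 1) → Fin (n + 1))).filter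
              (fun c => (∀ i j, i < j → c i < c j) ∧ ∀ i, Abar σ (c i) ∈ F)),
          ((n.choose (p.2 (Fin.last ℓ)) *
              ∏ j : Fin ℓ, Nat.choose (p.2 j.succ) (p.2 j.castSucc) : ℕ) : ℝ) :=
      Finset.sum_sigma' _ _ _
    rw [e1]
    have hstep : (∑ p ∈ (Finset.univ : Finset (Equiv.Perm (Fin n))).sigma
        (fun σ => (Finset.univ : Finset (Fin (ℓ + 1) → Fin (n + 1))).filter
          (fun c => (∀ i j, i < j → c i < c j) ∧ ∀ i, Abar σ (c i) ∈ F)),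
        ((n.choose (p.2 (Fin.last ℓ)) *
            ∏ j : Fin ℓ, Nat.choose (p.2 j.succ) (p.2 j.castSucc) : ℕ) : ℝ))
        = ∑ q ∈ chainsF.sigma
            (fun G => (Finset.univ : Finset (Equiv.Perm (Fin n))).filter
              (fun σ => ∀ i, Abar σ ((G i).card) = G i)),
          ((n.choose ((q.1 (Fin.last ℓ)).card) *
            ∏ j : Fin ℓ, Nat.choose ((q.1 j.succ).card) ((q.1 j.castSucc).card) : ℕ) : ℝ) := by
      apply Finset.sum_nbij'
        (i := fun p => ⟨fun i => Abar p.1 (p.2 i), p.1⟩)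
        (j := fun q => ⟨q.2, fun i => ⟨(q.1 i).card, by have := kle q.1 i; omega⟩⟩)
      · rintro ⟨σ, c⟩ hp
        simp only [Finset.mem_sigma, Finset.mem_univ, Finset.mem_filter, true_and,
          hchainsF] at hp ⊢
        obtain ⟨hmono, hmem⟩ := hp
        have hcard : ∀ i, (Abar σ ((c i : ℕ))).card = (c i : ℕ) :=
          fun i => Abar_card σ (by omega)
        refine ⟨⟨fun i j hij => ?_, fun i => hmem i⟩, fun i => by rw [hcard i]⟩
        rw [Finset.ssubset_iff_subset_ne]
        constructor
        · exact Abar_subset σ (le_of_lt (hmono i j hij))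
        · intro heq
          have := hcard i
          rw [heq, hcard j] at this
          have hlt : (c i : ℕ) < (c j : ℕ) := hmono i j hij
          omega
      · rintro ⟨G, σ⟩ hq
        simp only [Finset.mem_sigma, Finset.mem_univ, Finset.mem_filter, true_and,
          hchainsF] at hq ⊢
        obtain ⟨⟨hchain, hmem⟩, hcompat⟩ := hq
        constructor
        · intro i j hij
          exact (Fin.mk_lt_mk).2 (Finset.card_lt_card (hchain i j hij))
        · intro i
          show Abar σ ((G i).card) ∈ F
          rw [hcompat i]; exact hmem i
      · rintro ⟨σ, c⟩ hp
        simp only [Finset.mem_sigma, Finset.mem_univ, Finset.mem_filter, true_and] at hp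
        have hcard : ∀ i, (Abar σ ((c i : ℕ))).card = (c i : ℕ) :=
          fun i => Abar_card σ (by omega)
        refine Sigma.ext rfl (heq_of_eq ?_)
        funext i
        exact Fin.ext (hcard i)
      · rintro ⟨G, σ⟩ hq
        simp only [Finset.mem_sigma, Finset.mem_univ, Finset.mem_filter, true_and,
          hchainsF] at hq
        obtain ⟨⟨hchain, hmem⟩, hcompat⟩ := hq
        exact Sigma.ext (funext fun i' => hcompat i') HEq.rfl
      · rintro ⟨σ, c⟩ hp
        simp only [Finset.mem_sigma, Finset.mem_univ, Finset.mem_filter, true_and] at hp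
        have hcard : ∀ i, (Abar σ ((c i : ℕ))).card = (c i : ℕ) :=
          fun i => Abar_card σ (by omega)
        simp only
        simp only [hcard]
    rw [hstep]
    have e2 : (∑ q ∈ chainsF.sigma
            (fun G => (Finset.univ : Finset (Equiv.Perm (Fin n))).filter
              (fun σ => ∀ i, Abar σ ((G i).card) = G i)),
          ((n.choose ((q.1 (Fin.last ℓ)).card) *
            ∏ j : Fin ℓ, Nat.choose ((q.1 j.succ).card) ((q.1 j.castSucc).card) : ℕ) : ℝ))
        = ∑ G ∈ chainsF, ∑ σ ∈ (Finset.univ : Finset (Equiv.Perm (Fin n))).filter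
              (fun σ => ∀ i, Abar σ ((G i).card) = G i),
          ((n.choose ((G (Fin.last ℓ)).card) *
            ∏ j : Fin ℓ, Nat.choose ((G j.succ).card) ((G j.castSucc).card) : ℕ) : ℝ) :=
      Finset.sum_sigma _ _ _
    rw [e2]
    apply Finset.sum_congr rfl
    intro G hG
    simp only [hchainsF, Finset.mem_filter, Finset.mem_univ, true_and] at hG
    rw [Finset.sum_const, nsmul_eq_mul]
    rw [← count_compat hG.1]
    push_cast
    ring
  rw [hswap] at hT
  rw [Finset.sum_const, nsmul_eq_mul] at hT
  have hpos : (0 : ℝ) < n.factorial := by positivity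
  rw [mul_comm ((n.factorial : ℝ)) S] at hT
  exact le_of_mul_le_mul_right hT hpos
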